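/- Noether's theorem with Rayleigh dissipation: let n ∈ ℕ; let M, D : ℝⁿ → Matrix (Fin n) (Fin n) ℝ be C¹ with M(q) symmetric positive definite and D(q) symmetric positive semidefinite for all q; let V : ℝⁿ → ℝ be C¹; set H(q,p) = ½⟨p, M(q)⁻¹p⟩ + V(q); let ε ≥ 0. Let a : ℝⁿ → ℝⁿ be C¹ and assume: (i) (Killing condition) for all q, u ∈ ℝⁿ, ⟨(D_{a(q)}M)(q) u, u⟩ + 2⟨M(q) (Da(q) u), u⟩ = 0, where (D_{a(q)}M)(q) is the directional derivative of M at q in the direction a(q) and Da(q) is the Jacobian of a at q; (ii) ⟨∇V(q), a(q)⟩ = 0 for all q; (iii) D(q) a(q) = 0 for all q. Then along every differentiable solution (q, p) of the damped system q' = M(q)⁻¹p, p' = −∇_qH(q,p) − ε D(q)M(q)⁻¹p, the momentum J(q,p) := ⟨p, a(q)⟩ is constant in time. -/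

import Mathlib

open scoped RealInnerProductSpace

/-- Action of an `n × n` real matrix on a vector in `EuclideanSpace ℝ (Fin n)`. -/
noncomputable def mApp {n : ℕ} (A : Matrix (Fin n) (Fin n) ℝ)
    (v : EuclideanSpace ℝ (Fin n)) : EuclideanSpace ℝ (Fin n) :=
  Matrix.toEuclideanLin A v

attribute [local instance] Matrix.linftyOpNormedRing Matrix.linftyOpNormedAlgebra

section Aux

variable {n : ℕ}

lemma mApp_mul (A B : Matrix (Fin n) (Fin n) ℝ) (v : EuclideanSpace ℝ (Fin n)) :
    mApp (A * B) v = mApp A (mApp B v) := by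
  simp [mApp, Matrix.toEuclideanLin_apply, ← Matrix.mulVec_mulVec]

lemma mApp_one (v : EuclideanSpace ℝ (Fin n)) : mApp (1 : Matrix (Fin n) (Fin n) ℝ) v = v := by
  simp [mApp, Matrix.toEuclideanLin_apply]

lemma mApp_neg (A : Matrix (Fin n) (Fin n) ℝ) (v : EuclideanSpace ℝ (Fin n)) :
    mApp (-A) v = - mApp A v := by
  simp [mApp, map_neg]

lemma inner_mApp_left (A : Matrix (Fin n) (Fin n) ℝ) (u v : EuclideanSpace ℝ (Fin n)) :
    ⟪mApp A u, v⟫ = ⟪u, mApp A.transpose v⟫ := by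
  simp only [mApp, Matrix.toEuclideanLin_apply, PiLp.inner_apply, RCLike.inner_apply,
    conj_trivial]
  show ∑ i, v.ofLp i * (A.mulVec u.ofLp) i = ∑ i, (A.transpose.mulVec v.ofLp) i * u.ofLp i
  simp only [Matrix.mulVec, dotProduct, Matrix.transpose_apply, Finset.sum_mul,
    Finset.mul_sum]
  rw [Finset.sum_comm]
  congr 1; ext i; congr 1; ext j; ring

/-- The identity as a continuous linear equiv between the pi type and matrices. -/
noncomputable def matrixCLE (n : ℕ) : (Fin n → Fin n → ℝ) ≃L[ℝ] Matrix (Fin n) (Fin n) ℝ :=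
  LinearEquiv.toContinuousLinearEquiv
    (LinearEquiv.refl ℝ (Fin n → Fin n → ℝ) : (Fin n → Fin n → ℝ) ≃ₗ[ℝ] Matrix (Fin n) (Fin n) ℝ)

lemma contDiff_matrix (f : EuclideanSpace ℝ (Fin n) → Matrix (Fin n) (Fin n) ℝ)
    (h : ∀ i j, ContDiff ℝ 1 fun x => f x i j) : ContDiff ℝ 1 f := by
  have h1 : ContDiff ℝ 1 fun x => (fun i j => f x i j : Fin n → Fin n → ℝ) :=
    contDiff_pi.2 fun i => contDiff_pi.2 fun j => h i j
  exact ((matrixCLE n).toContinuousLinearMap.contDiff.of_le le_top).comp h1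

/-- Evaluation of a matrix entry as a continuous linear map. -/
noncomputable def entryCLM (i j : Fin n) : Matrix (Fin n) (Fin n) ℝ →L[ℝ] ℝ :=
  LinearMap.toContinuousLinearMap
    ((LinearMap.proj (R := ℝ) (φ := fun _ : Fin n => ℝ) j).comp
      (LinearMap.proj (R := ℝ) (φ := fun _ : Fin n => Fin n → ℝ) i) :
        Matrix (Fin n) (Fin n) ℝ →ₗ[ℝ] ℝ)

lemma entryCLM_apply (i j : Fin n) (A : Matrix (Fin n) (Fin n) ℝ) : entryCLM i j A = A i j := rfl

/-- The quadratic pairing `A ↦ ⟪P, mApp A P⟫` as a continuous linear map. -/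
noncomputable def innerFormCLM (P : EuclideanSpace ℝ (Fin n)) :
    Matrix (Fin n) (Fin n) ℝ →L[ℝ] ℝ :=
  LinearMap.toContinuousLinearMap
    { toFun := fun A => ⟪P, mApp A P⟫
      map_add' := fun A B => by
        simp [mApp, map_add, LinearMap.add_apply, inner_add_right]
      map_smul' := fun c A => by
        simp [mApp, map_smul, LinearMap.smul_apply, inner_smul_right] }

lemma innerFormCLM_apply (P : EuclideanSpace ℝ (Fin n)) (A : Matrix (Fin n) (Fin n) ℝ) :
    innerFormCLM P A = ⟪P, mApp A P⟫ := rfl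

lemma hasFDerivAt_matrix_inv
    (M : EuclideanSpace ℝ (Fin n) → Matrix (Fin n) (Fin n) ℝ)
    (Q : EuclideanSpace ℝ (Fin n)) (L : EuclideanSpace ℝ (Fin n) →L[ℝ] Matrix (Fin n) (Fin n) ℝ)
    (hML : HasFDerivAt M L Q) (hU : IsUnit (M Q)) :
    HasFDerivAt (fun x => (M x)⁻¹)
      ((-(ContinuousLinearMap.mulLeftRight ℝ _ ((M Q)⁻¹) ((M Q)⁻¹))).comp L) Q := by
  have hfun : (fun x => (M x)⁻¹) = fun x => Ring.inverse (M x) :=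
    funext fun x => Matrix.nonsing_inv_eq_ringInverse _
  rw [hfun]
  obtain ⟨u, hu⟩ := hU
  have h1 := hasFDerivAt_ringInverse (𝕜 := ℝ) u
  have hcoe : ((u⁻¹ : _ˣ) : Matrix (Fin n) (Fin n) ℝ) = (M Q)⁻¹ := by
    rw [Matrix.nonsing_inv_eq_ringInverse, ← hu, Ring.inverse_unit]
  rw [hu, hcoe] at h1
  exact h1.comp Q hML

/-- The pointwise vanishing of the time derivative of the momentum. -/
lemma pairing_zero (n : ℕ)
    (M D : EuclideanSpace ℝ (Fin n) → Matrix (Fin n) (Fin n) ℝ)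
    (hM : ∀ i j, ContDiff ℝ 1 fun q => M q i j)
    (hMpd : ∀ q, (M q).PosDef) (hDpsd : ∀ q, (D q).PosSemidef)
    (V : EuclideanSpace ℝ (Fin n) → ℝ) (hV : ContDiff ℝ 1 V)
    (ε : ℝ)
    (a : EuclideanSpace ℝ (Fin n) → EuclideanSpace ℝ (Fin n)) (ha : ContDiff ℝ 1 a)
    (hKilling : ∀ q u : EuclideanSpace ℝ (Fin n),
      ⟪mApp (Matrix.of fun i j => fderiv ℝ (fun x => M x i j) q (a q)) u, u⟫
        + 2 * ⟪mApp (M q) (fderiv ℝ a q u), u⟫ = 0)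
    (hVinv : ∀ q, ⟪gradient V q, a q⟫ = 0)
    (hDa : ∀ q, mApp (D q) (a q) = 0)
    (Q P : EuclideanSpace ℝ (Fin n)) :
    ⟪P, fderiv ℝ a Q (mApp ((M Q)⁻¹) P)⟫
      + ⟪-(gradient (fun x => (1/2) * ⟪P, mApp ((M x)⁻¹) P⟫ + V x) Q)
          - ε • mApp (D Q) (mApp ((M Q)⁻¹) P), a Q⟫ = 0 := by
  have hMsym : (M Q).transpose = M Q := by
    have h := (hMpd Q).isHermitian
    rwa [Matrix.IsHermitian, Matrix.conjTranspose_eq_transpose_of_trivial] at h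
  have hDsym : (D Q).transpose = D Q := by
    have h := (hDpsd Q).isHermitian
    rwa [Matrix.IsHermitian, Matrix.conjTranspose_eq_transpose_of_trivial] at h
  have hMunit : IsUnit (M Q) :=
    (Matrix.isUnit_iff_isUnit_det _).2 (isUnit_iff_ne_zero.2 (hMpd Q).det_pos.ne')
  have hMinvsym : ((M Q)⁻¹).transpose = (M Q)⁻¹ := by
    rw [Matrix.transpose_nonsing_inv, hMsym]
  set u : EuclideanSpace ℝ (Fin n) := mApp ((M Q)⁻¹) P with hu
  have hMP : mApp (M Q) u = P := by
    rw [hu, ← mApp_mul,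
      Matrix.mul_nonsing_inv _ ((Matrix.isUnit_iff_isUnit_det _).1 hMunit), mApp_one]
  -- derivative of `M` at `Q`
  have hMc : ContDiff ℝ 1 M := contDiff_matrix M hM
  have hML : HasFDerivAt M (fderiv ℝ M Q) Q := (hMc.differentiable one_ne_zero Q).hasFDerivAt
  set L := fderiv ℝ M Q with hL
  set W : Matrix (Fin n) (Fin n) ℝ :=
    Matrix.of fun i j => fderiv ℝ (fun x => M x i j) Q (a Q) with hWdef
  have hW : W = L (a Q) := by
    ext i j
    have h1 : HasFDerivAt (fun x => M x i j) ((entryCLM i j).comp L) Q :=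
      (entryCLM i j).hasFDerivAt.comp Q hML
    show fderiv ℝ (fun x => M x i j) Q (a Q) = L (a Q) i j
    rw [h1.fderiv]; rfl
  -- derivative of the Hamiltonian in `q`
  have hinv := hasFDerivAt_matrix_inv M Q L hML hMunit
  have hKder : HasFDerivAt (fun x => (1/2 : ℝ) * ⟪P, mApp ((M x)⁻¹) P⟫)
      ((1/2 : ℝ) • ((innerFormCLM P).comp
        ((-(ContinuousLinearMap.mulLeftRight ℝ _ ((M Q)⁻¹) ((M Q)⁻¹))).comp L))) Q :=
    ((innerFormCLM P).hasFDerivAt.comp Q hinv).const_mul (1/2 : ℝ)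
  have hVd : HasFDerivAt V (fderiv ℝ V Q) Q := (hV.differentiable one_ne_zero Q).hasFDerivAt
  have hHd : HasFDerivAt (fun x => (1/2 : ℝ) * ⟪P, mApp ((M x)⁻¹) P⟫ + V x)
      (((1/2 : ℝ) • ((innerFormCLM P).comp
        ((-(ContinuousLinearMap.mulLeftRight ℝ _ ((M Q)⁻¹) ((M Q)⁻¹))).comp L)))
        + fderiv ℝ V Q) Q := hKder.add hVd
  -- the potential term vanishes
  have hVa : fderiv ℝ V Q (a Q) = 0 := by
    have h := hVinv Q
    rw [gradient, InnerProductSpace.toDual_symm_apply] at h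
    exact h
  -- pairing the gradient of the Hamiltonian with `a Q`
  have hgradH : ⟪gradient (fun x => (1/2) * ⟪P, mApp ((M x)⁻¹) P⟫ + V x) Q, a Q⟫
      = (1/2 : ℝ) * ⟪P, mApp (-((M Q)⁻¹ * (W * (M Q)⁻¹))) P⟫ := by
    rw [gradient, hHd.fderiv, InnerProductSpace.toDual_symm_apply]
    simp only [ContinuousLinearMap.add_apply, ContinuousLinearMap.coe_smul',
      Pi.smul_apply, ContinuousLinearMap.coe_comp', Function.comp_apply,
      ContinuousLinearMap.neg_apply, ContinuousLinearMap.mulLeftRight_apply,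
      smul_eq_mul, hVa, add_zero, ← hW]
    change (1/2 : ℝ) * ⟪P, mApp (-((M Q)⁻¹ * L (a Q) * (M Q)⁻¹)) P⟫ = _
    rw [← hW]
    ring_nf
    rw [mul_assoc]
  -- value of the kinetic variation
  have hkin : ⟪P, mApp (-((M Q)⁻¹ * (W * (M Q)⁻¹))) P⟫ = -⟪mApp W u, u⟫ := by
    rw [mApp_neg, inner_neg_right, mApp_mul, mApp_mul, ← hu, real_inner_comm,
      inner_mApp_left, hMinvsym, ← hu]
  -- the dissipation term vanishes
  have hdis : ⟪mApp (D Q) u, a Q⟫ = 0 := by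
    rw [inner_mApp_left, hDsym, hDa, inner_zero_right]
  -- rewrite the momentum transport term
  have hterm2 : ⟪P, fderiv ℝ a Q u⟫ = ⟪mApp (M Q) (fderiv ℝ a Q u), u⟫ := by
    rw [← hMP, inner_mApp_left, hMsym]
    exact real_inner_comm _ _
  have hkill := hKilling Q u
  rw [← hWdef] at hkill
  rw [inner_sub_left, inner_neg_left, real_inner_smul_left, hgradH, hkin, hdis, hterm2]
  ring_nf
  ring_nf at hkill
  linarith
end Aux

/-- Noether's theorem with Rayleigh dissipation: if the vector field `a` satisfies the
Killing condition for the metric `M`, leaves the potential `V` invariant, and lies in the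
kernel of the dissipation tensor `D`, then the momentum `J(q,p) = ⟪p, a q⟫` is conserved
along every differentiable solution of the damped system
`q' = M(q)⁻¹ p`, `p' = -∇_q H(q,p) - ε D(q) M(q)⁻¹ p`,
where `H(q,p) = ½⟪p, M(q)⁻¹ p⟫ + V(q)`. -/
theorem noether_with_rayleigh_dissipation (n : ℕ)
    (M D : EuclideanSpace ℝ (Fin n) → Matrix (Fin n) (Fin n) ℝ)
    (hM : ∀ i j, ContDiff ℝ 1 fun q => M q i j)
    (hD : ∀ i j, ContDiff ℝ 1 fun q => D q i j)
    (hMpd : ∀ q, (M q).PosDef) (hDpsd : ∀ q, (D q).PosSemidef)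
    (V : EuclideanSpace ℝ (Fin n) → ℝ) (hV : ContDiff ℝ 1 V)
    (ε : ℝ) (hε : 0 ≤ ε)
    (a : EuclideanSpace ℝ (Fin n) → EuclideanSpace ℝ (Fin n)) (ha : ContDiff ℝ 1 a)
    (hKilling : ∀ q u : EuclideanSpace ℝ (Fin n),
      ⟪mApp (Matrix.of fun i j => fderiv ℝ (fun x => M x i j) q (a q)) u, u⟫
        + 2 * ⟪mApp (M q) (fderiv ℝ a q u), u⟫ = 0)
    (hVinv : ∀ q, ⟪gradient V q, a q⟫ = 0)
    (hDa : ∀ q, mApp (D q) (a q) = 0)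
    (q p : ℝ → EuclideanSpace ℝ (Fin n))
    (hq : ∀ t : ℝ, HasDerivAt q (mApp ((M (q t))⁻¹) (p t)) t)
    (hp : ∀ t : ℝ, HasDerivAt p
      (-(gradient (fun x => (1/2) * ⟪p t, mApp ((M x)⁻¹) (p t)⟫ + V x) (q t))
        - ε • mApp (D (q t)) (mApp ((M (q t))⁻¹) (p t))) t) :
    ∀ t t' : ℝ, ⟪p t, a (q t)⟫ = ⟪p t', a (q t')⟫ := by
  have key : ∀ t, HasDerivAt (fun s => ⟪p s, a (q s)⟫) 0 t := by
    intro t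
    have haq : HasDerivAt (fun s => a (q s))
        (fderiv ℝ a (q t) (mApp ((M (q t))⁻¹) (p t))) t :=
      (ha.differentiable one_ne_zero (q t)).hasFDerivAt.comp_hasDerivAt t (hq t)
    have hJ := (hp t).inner ℝ haq
    have h0 := pairing_zero n M D hM hMpd hDpsd V hV ε a ha hKilling hVinv hDa (q t) (p t)
    rw [h0] at hJ
    exact hJ
  intro t t'
  exact is_const_of_deriv_eq_zero (fun s => (key s).differentiableAt)
    (fun s => (key s).deriv) t t'
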